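/- Let α be a composition of n. For every T ∈ SET(α) there exist indices i_1,…,i_r (possibly r = 0) such that successively applying π_{i_1}^{RS*},…,π_{i_r}^{RS*} to S^{col}_α yields T, with every intermediate result lying in SET(α). Consequently S^{col}_α is the unique minimal element of SET(α) under ≼, and SET(α) = {T ∈ SIT(α) : S^{col}_α ≼ T ≼ S^{row}_α}. -/

import Mathlib

open Classical

namespace ImmHecke

/-- A filling assigns a natural-number entry to each cell `(row, column)` (0-indexed);
row `0` is the bottom row.  Cells outside the diagram carry the junk value `0`. -/
abbrev Filling : Type := ℕ × ℕ → ℕ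

/-- `c` is a cell of the diagram of the composition `α` (0-indexed rows and columns;
row `i` has `α_i` cells). -/
def IsCell (α : List ℕ) (c : ℕ × ℕ) : Prop :=
  c.1 < α.length ∧ c.2 < α.getD c.1 0

/-- `α` is a composition of `n`: a list of positive integers summing to `n`. -/
def IsComposition (α : List ℕ) (n : ℕ) : Prop :=
  (∀ a ∈ α, 0 < a) ∧ α.sum = n

/-- `T` is a bijective filling of the diagram of `α` with the entries `1, …, n`
(where `n = α.sum`), and with value `0` off the diagram. -/
def IsStdFilling (α : List ℕ) (T : Filling) : Prop :=
  (∀ c, ¬ IsCell α c → T c = 0) ∧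
  (∀ c, IsCell α c → 1 ≤ T c ∧ T c ≤ α.sum) ∧
  (∀ c c', IsCell α c → IsCell α c' → T c = T c' → c = c') ∧
  (∀ m, 1 ≤ m → m ≤ α.sum → ∃ c, IsCell α c ∧ T c = m)

/-- A standard immaculate tableau of shape `α`: a bijective standard filling whose
first-column entries strictly increase bottom to top and whose rows strictly
increase left to right. -/
def IsSIT (α : List ℕ) (T : Filling) : Prop :=
  IsStdFilling α T ∧
  (∀ i i' : ℕ, IsCell α (i, 0) → IsCell α (i', 0) → i < i' → T (i, 0) < T (i', 0)) ∧
  (∀ i j j' : ℕ, IsCell α (i, j) → IsCell α (i, j') → j < j' → T (i, j) < T (i, j'))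

/-- A standard extended tableau of shape `α`: a bijective standard filling whose rows
strictly increase left to right and all of whose columns strictly increase
bottom to top.  Note `SET(α) ⊆ SIT(α)`. -/
def IsSET (α : List ℕ) (T : Filling) : Prop :=
  IsStdFilling α T ∧
  (∀ i j j' : ℕ, IsCell α (i, j) → IsCell α (i, j') → j < j' → T (i, j) < T (i, j')) ∧
  (∀ i i' j : ℕ, IsCell α (i, j) → IsCell α (i', j) → i < i' → T (i, j) < T (i', j))

/-- `SIT*(α)`: standard immaculate tableaux whose first column contains exactly the
entries `1, 2, …, ℓ(α)`. -/
def IsSITstar (α : List ℕ) (T : Filling) : Prop :=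
  IsSIT α T ∧
  (∀ i, IsCell α (i, 0) → 1 ≤ T (i, 0) ∧ T (i, 0) ≤ α.length) ∧
  (∀ m, 1 ≤ m → m ≤ α.length → ∃ i, IsCell α (i, 0) ∧ T (i, 0) = m)

/-- In `T`, the entry `m+1` lies in a row strictly above the row of `m`. -/
def SuccAbove (α : List ℕ) (T : Filling) (m : ℕ) : Prop :=
  ∃ c c', IsCell α c ∧ IsCell α c' ∧ T c = m ∧ T c' = m + 1 ∧ c.1 < c'.1

/-- In `T`, the entries `m` and `m+1` lie in the same row. -/
def SuccSameRow (α : List ℕ) (T : Filling) (m : ℕ) : Prop :=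
  ∃ c c', IsCell α c ∧ IsCell α c' ∧ T c = m ∧ T c' = m + 1 ∧ c.1 = c'.1

/-- In `T`, the entry `m+1` lies in a row strictly below the row of `m`. -/
def SuccBelow (α : List ℕ) (T : Filling) (m : ℕ) : Prop :=
  ∃ c c', IsCell α c ∧ IsCell α c' ∧ T c = m ∧ T c' = m + 1 ∧ c'.1 < c.1

/-- In `T`, the entries `m` and `m+1` are both in the first column. -/
def BothFirstColumn (α : List ℕ) (T : Filling) (m : ℕ) : Prop :=
  ∃ c c', IsCell α c ∧ IsCell α c' ∧ T c = m ∧ T c' = m + 1 ∧ c.2 = 0 ∧ c'.2 = 0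

/-- `s_i(T)`: exchange the entries `i` and `i+1` of `T`. -/
def swapEntries (i : ℕ) (T : Filling) : Filling :=
  fun c => if T c = i then i + 1 else if T c = i + 1 then i else T c

/-- The row-strict dual immaculate 0-Hecke operator `π_i^{RS*}` on `SIT(α) ∪ {0}`
(`0` is encoded as `none`): `π_i(T) = T` if `i+1` is strictly above `i`;
`π_i(T) = 0` if `i` and `i+1` are in the same row; `π_i(T) = s_i(T)` if `i+1` is
strictly below `i`. -/
noncomputable def piRS (α : List ℕ) (i : ℕ) : Option Filling → Option Filling
  | none => none
  | some T =>
    if SuccAbove α T i then some T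
    else if SuccSameRow α T i then none
    else some (swapEntries i T)

/-- The dual immaculate 0-Hecke operator `π_i^{S*}` on `SIT(α) ∪ {0}`:
`π_i(T) = T` if `i+1` is in a row weakly below `i`; `π_i(T) = 0` if `i` and `i+1`
are both in the first column; `π_i(T) = s_i(T)` if `i+1` is strictly above `i`
and `i, i+1` are not both in the first column. -/
noncomputable def piS (α : List ℕ) (i : ℕ) : Option Filling → Option Filling
  | none => none
  | some T =>
    if SuccSameRow α T i ∨ SuccBelow α T i then some T
    else if BothFirstColumn α T i then none
    else some (swapEntries i T)

/-- The 0-Hecke operator `π_i^{A*}` on `SIT(α)`: `π_i(T) = T` if `i+1` is strictly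
above `i` or in the same row as `i`; `π_i(T) = s_i(T)` if `i+1` is strictly below `i`. -/
noncomputable def piA (α : List ℕ) (i : ℕ) (T : Filling) : Filling :=
  if SuccBelow α T i then swapEntries i T else T

/-- The 0-Hecke operator `π_i^{Ā*}` on `SIT(α) ∪ {0}`: `π_i(T) = T` if `i+1` is
strictly below `i`; `π_i(T) = 0` if `i` and `i+1` are in the same row or both in
the first column; `π_i(T) = s_i(T)` if `i+1` is strictly above `i` and `i, i+1`
are not both in the first column. -/
noncomputable def piAbar (α : List ℕ) (i : ℕ) : Option Filling → Option Filling
  | none => none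
  | some T =>
    if SuccBelow α T i then some T
    else if SuccSameRow α T i ∨ BothFirstColumn α T i then none
    else some (swapEntries i T)

/-- `x` belongs to `SIT(α) ∪ {0}` (with `0 = none`). -/
def InSITZ (α : List ℕ) (x : Option Filling) : Prop :=
  ∀ T, x = some T → IsSIT α T

/-- Successively apply the operators `π_{i_1}^{RS*}, …, π_{i_r}^{RS*}` (the list `l = [i_1, …, i_r]`). -/
noncomputable def applySeqRS (α : List ℕ) (l : List ℕ) (x : Option Filling) : Option Filling :=
  l.foldl (fun y i => piRS α i y) x

/-- Successively apply the operators `π_{i_1}^{S*}, …, π_{i_r}^{S*}`. -/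
noncomputable def applySeqS (α : List ℕ) (l : List ℕ) (x : Option Filling) : Option Filling :=
  l.foldl (fun y i => piS α i y) x

/-- The relation `T₁ ≼ T₂` on `SIT(α)`: some sequence of operators `π_i^{RS*}`
(indices in `{1, …, n-1}`, possibly empty) sends `T₁` to `T₂`. -/
def preRS (α : List ℕ) (T₁ T₂ : Filling) : Prop :=
  ∃ l : List ℕ, (∀ i ∈ l, 1 ≤ i ∧ i ≤ α.sum - 1) ∧ applySeqRS α l (some T₁) = some T₂

/-- The one-line notation of `σ(T)`: read the entries of `T` from right to left in
each row, rows from top to bottom. -/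
def readingWord (α : List ℕ) (T : Filling) : List ℕ :=
  ((List.range α.length).reverse).flatMap
    (fun i => ((List.range (α.getD i 0)).map fun j => T (i, j)).reverse)

/-- The number of inversions of a word `w`: pairs of positions `p < q` with `w p > w q`. -/
def inversions (w : List ℕ) : ℕ :=
  ((Finset.range w.length ×ˢ Finset.range w.length).filter
    (fun pq : ℕ × ℕ => pq.1 < pq.2 ∧ w.getD pq.2 0 < w.getD pq.1 0)).card

/-- `S⁰_α`: first column contains `1, …, ℓ` bottom to top; the remaining cells are
filled with `ℓ+1, …, n` consecutively, reading rows from top to bottom and left to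
right within each row. -/
noncomputable def S0 (α : List ℕ) : Filling := fun c =>
  if IsCell α c then
    if c.2 = 0 then c.1 + 1
    else
      α.length + (((List.range α.length).filter fun r => c.1 < r).map fun r => α.getD r 0 - 1).sum + c.2
  else 0

/-- `S^{row}_α`: the row superstandard tableau, entries `1, …, n` placed consecutively
reading rows bottom to top, left to right within each row. -/
noncomputable def Srow (α : List ℕ) : Filling := fun c =>
  if IsCell α c then (α.take c.1).sum + c.2 + 1 else 0

/-- `S^{row*}_α`: first column contains `1, …, ℓ` bottom to top; the remaining cells
are filled with `ℓ+1, …, n` consecutively, reading rows bottom to top, left to right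
within each row. -/
noncomputable def SrowStar (α : List ℕ) : Filling := fun c =>
  if IsCell α c then
    if c.2 = 0 then c.1 + 1
    else α.length + ((List.range c.1).map fun r => α.getD r 0 - 1).sum + c.2
  else 0

/-- `S^{col}_α`: the column superstandard tableau, entries `1, …, n` placed
consecutively reading columns bottom to top, columns left to right. -/
noncomputable def Scol (α : List ℕ) : Filling := fun c =>
  if IsCell α c then
    ((List.range c.2).map fun j' =>
        ((List.range α.length).filter fun r => j' < α.getD r 0).length).sum
      + ((List.range c.1).filter fun r => c.2 < α.getD r 0).length + 1
  else 0

/-- The image of a basis element of `V_α` under the linearly extended operator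
`π_i^{RS*}` (the value `0` of the operator is interpreted as the zero vector). -/
noncomputable def piTargetRS (α : List ℕ) (i : ℕ) (T : {T : Filling // IsSIT α T}) :
    ({T : Filling // IsSIT α T} →₀ ℚ) :=
  match piRS α i (some T.val) with
  | none => 0
  | some T' => if h : IsSIT α T' then Finsupp.single ⟨T', h⟩ 1 else 0

/-- The operator `π_i^{RS*}` extended to a `ℚ`-linear endomorphism of the free
`ℚ`-vector space `V_α` with basis `SIT(α)`. -/
noncomputable def piRSLin (α : List ℕ) (i : ℕ) :
    ({T : Filling // IsSIT α T} →₀ ℚ) →ₗ[ℚ] ({T : Filling // IsSIT α T} →₀ ℚ) :=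
  Finsupp.lsum ℚ fun T => LinearMap.toSpanSingleton ℚ _ (piTargetRS α i T)

/-- The image of a basis element of `Z_α` under the linearly extended operator
`π_i^{RS*}`. -/
noncomputable def piTargetSET (α : List ℕ) (i : ℕ) (T : {T : Filling // IsSET α T}) :
    ({T : Filling // IsSET α T} →₀ ℚ) :=
  match piRS α i (some T.val) with
  | none => 0
  | some T' => if h : IsSET α T' then Finsupp.single ⟨T', h⟩ 1 else 0

/-- The operator `π_i^{RS*}` extended to a `ℚ`-linear endomorphism of the free
`ℚ`-vector space `Z_α` with basis `SET(α)`. -/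
noncomputable def piRSLinSET (α : List ℕ) (i : ℕ) :
    ({T : Filling // IsSET α T} →₀ ℚ) →ₗ[ℚ] ({T : Filling // IsSET α T} →₀ ℚ) :=
  Finsupp.lsum ℚ fun T => LinearMap.toSpanSingleton ℚ _ (piTargetSET α i T)

/-! ### Auxiliary development -/

private def cellsF (α : List ℕ) : Finset (ℕ × ℕ) :=
  (Finset.range α.length).biUnion fun i => (Finset.range (α.getD i 0)).image fun j => (i, j)

private lemma mem_cellsF {α : List ℕ} {c : ℕ × ℕ} : c ∈ cellsF α ↔ IsCell α c := by
  obtain ⟨i, j⟩ := c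
  simp only [cellsF, Finset.mem_biUnion, Finset.mem_range, Finset.mem_image, IsCell]
  constructor
  · rintro ⟨a, ha, b, hb, hab⟩
    cases hab
    exact ⟨ha, hb⟩
  · rintro ⟨h1, h2⟩
    exact ⟨i, h1, j, h2, rfl⟩

private lemma sum_getD (α : List ℕ) : (∑ i ∈ Finset.range α.length, α.getD i 0) = α.sum := by
  induction α with
  | nil => simp
  | cons a l ih =>
    rw [List.length_cons, Finset.sum_range_succ', List.sum_cons]
    simp only [List.getD_cons_succ, List.getD_cons_zero]
    rw [ih]; omega

private lemma card_cellsF (α : List ℕ) : (cellsF α).card = α.sum := by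
  rw [cellsF, Finset.card_biUnion]
  · rw [← sum_getD α]
    refine Finset.sum_congr rfl fun i _ => ?_
    rw [Finset.card_image_of_injective _ (fun x y hxy => (Prod.ext_iff.mp hxy).2),
      Finset.card_range]
  · intro x _ y _ hxy
    rw [Function.onFun, Finset.disjoint_left]
    intro c hc hc'
    simp only [Finset.mem_image, Finset.mem_range] at hc hc'
    obtain ⟨b, _, rfl⟩ := hc
    obtain ⟨b', _, h⟩ := hc'
    exact hxy ((Prod.ext_iff.mp h).1).symm

private lemma sum_map_range (n : ℕ) (f : ℕ → ℕ) :
    ((List.range n).map f).sum = ∑ i ∈ Finset.range n, f i := by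
  induction n with
  | zero => simp
  | succ k ih =>
    rw [List.range_succ, List.map_append, List.sum_append, Finset.sum_range_succ, ih]
    simp

private lemma length_filter_range (n : ℕ) (p : ℕ → Prop) [DecidablePred p] :
    ((List.range n).filter (fun x => decide (p x))).length = ((Finset.range n).filter p).card := by
  induction n with
  | zero => simp
  | succ k ih =>
    rw [List.range_succ, Finset.range_add_one, List.filter_append, List.length_append, ih,
      Finset.filter_insert]
    by_cases h : p k
    · rw [if_pos h, Finset.card_insert_of_notMem (by simp)]
      simp [h]
    · rw [if_neg h]
      simp [h]

private def colH (α : List ℕ) (j : ℕ) : ℕ :=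
  ((List.range α.length).filter fun r => j < α.getD r 0).length

private lemma colH_eq (α : List ℕ) (j : ℕ) :
    colH α j = ((Finset.range α.length).filter fun r => j < α.getD r 0).card :=
  length_filter_range _ _

private def colHsum (α : List ℕ) (j : ℕ) : ℕ := ∑ j' ∈ Finset.range j, colH α j'

private def colG (α : List ℕ) (c : ℕ × ℕ) : ℕ :=
  ((List.range c.1).filter fun r => c.2 < α.getD r 0).length

private lemma colG_eq (α : List ℕ) (c : ℕ × ℕ) :
    colG α c = ((Finset.range c.1).filter fun r => c.2 < α.getD r 0).card :=
  length_filter_range _ _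

private lemma Scol_eq {α : List ℕ} {c : ℕ × ℕ} (hc : IsCell α c) :
    Scol α c = colHsum α c.2 + colG α c + 1 := by
  show (if IsCell α c then _ else 0) = _
  rw [if_pos hc, sum_map_range]
  rfl

private lemma colHsum_mono (α : List ℕ) {a b : ℕ} (h : a ≤ b) : colHsum α a ≤ colHsum α b :=
  Finset.sum_le_sum_of_subset (Finset.range_subset_range.mpr h)

private lemma getD_le_sum {α : List ℕ} {i : ℕ} (h : i < α.length) : α.getD i 0 ≤ α.sum := by
  rw [List.getD_eq_getElem α 0 h]
  exact List.single_le_sum (fun x _ => Nat.zero_le x) _ (List.getElem_mem h)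

private lemma colHsum_total (α : List ℕ) : colHsum α α.sum = α.sum := by
  unfold colHsum
  simp only [colH_eq]
  rw [Finset.sum_congr rfl fun j' (_ : j' ∈ Finset.range α.sum) =>
    Finset.card_filter (fun r => j' < α.getD r 0) (Finset.range α.length), Finset.sum_comm]
  rw [Finset.sum_congr rfl fun r (hr : r ∈ Finset.range α.length) => ?_, sum_getD]
  rw [← Finset.card_filter]
  have he : (Finset.range α.sum).filter (fun j' => j' < α.getD r 0) = Finset.range (α.getD r 0) := by
    ext x
    simp only [Finset.mem_filter, Finset.mem_range]
    have := getD_le_sum (Finset.mem_range.mp hr)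
    omega
  rw [he, Finset.card_range]

private def colOrd (c c' : ℕ × ℕ) : Prop := c.2 < c'.2 ∨ (c.2 = c'.2 ∧ c.1 < c'.1)
private def rowOrd (c c' : ℕ × ℕ) : Prop := c.1 < c'.1 ∨ (c.1 = c'.1 ∧ c.2 < c'.2)

private lemma colOrd_total : ∀ c c' : ℕ × ℕ, c ≠ c' → colOrd c c' ∨ colOrd c' c := by
  rintro ⟨a, b⟩ ⟨a', b'⟩ h
  simp only [colOrd, ne_eq, Prod.mk.injEq, not_and] at *
  omega

private lemma rowOrd_total : ∀ c c' : ℕ × ℕ, c ≠ c' → rowOrd c c' ∨ rowOrd c' c := by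
  rintro ⟨a, b⟩ ⟨a', b'⟩ h
  simp only [rowOrd, ne_eq, Prod.mk.injEq, not_and] at *
  omega

private lemma colOrd_trans : ∀ x y z : ℕ × ℕ, colOrd x y → colOrd y z → colOrd x z := by
  rintro ⟨a, b⟩ ⟨a', b'⟩ ⟨a'', b''⟩ h1 h2
  simp only [colOrd] at *
  omega

private lemma rowOrd_trans : ∀ x y z : ℕ × ℕ, rowOrd x y → rowOrd y z → rowOrd x z := by
  rintro ⟨a, b⟩ ⟨a', b'⟩ ⟨a'', b''⟩ h1 h2
  simp only [rowOrd] at *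
  omega

private lemma colOrd_asymm : ∀ x y : ℕ × ℕ, colOrd x y → ¬ colOrd y x := by
  rintro ⟨a, b⟩ ⟨a', b'⟩ h1 h2
  simp only [colOrd] at *
  omega

private lemma rowOrd_asymm : ∀ x y : ℕ × ℕ, rowOrd x y → ¬ rowOrd y x := by
  rintro ⟨a, b⟩ ⟨a', b'⟩ h1 h2
  simp only [rowOrd] at *
  omega

private lemma colOrd_elim {a1 a2 b1 b2 : ℕ} (h : colOrd (a1, a2) (b1, b2)) :
    a2 < b2 ∨ (a2 = b2 ∧ a1 < b1) := h

private lemma rowOrd_elim {a1 a2 b1 b2 : ℕ} (h : rowOrd (a1, a2) (b1, b2)) :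
    a1 < b1 ∨ (a1 = b1 ∧ a2 < b2) := h

private lemma colG_lt_colH {α : List ℕ} {c : ℕ × ℕ} (hc : IsCell α c) :
    colG α c < colH α c.2 := by
  rw [colG_eq, colH_eq]
  apply Finset.card_lt_card
  rw [Finset.ssubset_def]
  constructor
  · exact Finset.filter_subset_filter _ (Finset.range_subset_range.mpr (le_of_lt hc.1))
  · intro hsub
    have h1 : c.1 ∈ (Finset.range α.length).filter fun r => c.2 < α.getD r 0 :=
      Finset.mem_filter.mpr ⟨Finset.mem_range.mpr hc.1, hc.2⟩
    have h2 := hsub h1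
    have := (Finset.mem_filter.mp h2).1
    simp at this

private lemma Scol_step {α : List ℕ} {c : ℕ × ℕ} (hc : IsCell α c) :
    colHsum α c.2 + colG α c + 1 ≤ colHsum α (c.2 + 1) := by
  have h1 : colHsum α (c.2 + 1) = colHsum α c.2 + colH α c.2 := Finset.sum_range_succ _ _
  have h2 := colG_lt_colH hc
  omega

private lemma Scol_lt_of_colOrd {α : List ℕ} {c c' : ℕ × ℕ} (hc : IsCell α c)
    (hc' : IsCell α c') (h : colOrd c c') : Scol α c < Scol α c' := by
  rw [Scol_eq hc, Scol_eq hc']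
  rcases h with h | ⟨h1, h2⟩
  · have e1 := Scol_step hc
    have e2 : colHsum α (c.2 + 1) ≤ colHsum α c'.2 := colHsum_mono α h
    omega
  · have e0 : colHsum α c.2 = colHsum α c'.2 := by rw [h1]
    have e1 : colG α c < colG α c' := by
      rw [colG_eq, colG_eq, h1]
      apply Finset.card_lt_card
      rw [Finset.ssubset_def]
      constructor
      · exact Finset.filter_subset_filter _ (Finset.range_subset_range.mpr (le_of_lt h2))
      · intro hsub
        have h3 : c.1 ∈ (Finset.range c'.1).filter fun r => c'.2 < α.getD r 0 :=
          Finset.mem_filter.mpr ⟨Finset.mem_range.mpr h2, h1 ▸ hc.2⟩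
        have h4 := hsub h3
        have := (Finset.mem_filter.mp h4).1
        simp at this
    omega

private lemma Scol_le {α : List ℕ} {c : ℕ × ℕ} (hc : IsCell α c) : Scol α c ≤ α.sum := by
  rw [Scol_eq hc]
  have h1 := Scol_step hc
  have h0 : c.2 + 1 ≤ α.sum := by
    have := getD_le_sum hc.1
    have := hc.2
    omega
  have h2 : colHsum α (c.2 + 1) ≤ colHsum α α.sum := colHsum_mono α h0
  rw [colHsum_total] at h2
  omega

private lemma inj_of_mono {α : List ℕ} {T : Filling} (o : ℕ × ℕ → ℕ × ℕ → Prop)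
    (htot : ∀ c c', c ≠ c' → o c c' ∨ o c' c)
    (hmono : ∀ c c', IsCell α c → IsCell α c' → o c c' → T c < T c') :
    ∀ c c', IsCell α c → IsCell α c' → T c = T c' → c = c' := by
  intro c c' hc hc' he
  by_contra hne
  rcases htot c c' hne with h | h
  · have := hmono _ _ hc hc' h; omega
  · have := hmono _ _ hc' hc h; omega

private lemma surj_of_inj {α : List ℕ} {T : Filling}
    (hbd : ∀ c, IsCell α c → 1 ≤ T c ∧ T c ≤ α.sum)
    (hinj : ∀ c c', IsCell α c → IsCell α c' → T c = T c' → c = c') :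
    ∀ m, 1 ≤ m → m ≤ α.sum → ∃ c, IsCell α c ∧ T c = m := by
  intro m h1 h2
  have himg : (cellsF α).image T = Finset.Icc 1 α.sum := by
    apply Finset.eq_of_subset_of_card_le
    · intro v hv
      obtain ⟨c, hc, rfl⟩ := Finset.mem_image.mp hv
      have := hbd c (mem_cellsF.mp hc)
      simp only [Finset.mem_Icc]
      omega
    · rw [Finset.card_image_of_injOn fun x hx y hy hxy =>
        hinj x y (mem_cellsF.mp hx) (mem_cellsF.mp hy) hxy, card_cellsF, Nat.card_Icc]
      omega
  have hm : m ∈ (cellsF α).image T := himg ▸ Finset.mem_Icc.mpr ⟨h1, h2⟩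
  obtain ⟨c, hc, he⟩ := Finset.mem_image.mp hm
  exact ⟨c, mem_cellsF.mp hc, he⟩

private lemma count_lt {α : List ℕ} {T : Filling} (hT : IsStdFilling α T) {c : ℕ × ℕ}
    (hc : IsCell α c) : ((cellsF α).filter fun c' => T c' < T c).card = T c - 1 := by
  obtain ⟨hz, hbd, hinj, hsurj⟩ := hT
  have himg : ((cellsF α).filter fun c' => T c' < T c).image T = Finset.Icc 1 (T c - 1) := by
    ext v
    simp only [Finset.mem_image, Finset.mem_filter, Finset.mem_Icc]
    constructor
    · rintro ⟨c', ⟨hc', hlt⟩, rfl⟩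
      have := hbd c' (mem_cellsF.mp hc')
      omega
    · rintro ⟨hv1, hv2⟩
      have hcb := hbd c hc
      obtain ⟨c', hc', he⟩ := hsurj v hv1 (by omega)
      exact ⟨c', ⟨mem_cellsF.mpr hc', by omega⟩, he⟩
  have hcard := Finset.card_image_of_injOn
    (f := T) (s := (cellsF α).filter fun c' => T c' < T c)
    (fun x hx y hy hxy => hinj x y (mem_cellsF.mp (Finset.mem_filter.mp hx).1)
      (mem_cellsF.mp (Finset.mem_filter.mp hy).1) hxy)
  rw [himg, Nat.card_Icc] at hcard
  have := hbd c hc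
  omega

private lemma value_formula {α : List ℕ} {T : Filling} (o : ℕ × ℕ → ℕ × ℕ → Prop)
    (htot : ∀ c c', c ≠ c' → o c c' ∨ o c' c) (hT : IsStdFilling α T)
    (hmono : ∀ c c', IsCell α c → IsCell α c' → o c c' → T c < T c') {c : ℕ × ℕ}
    (hc : IsCell α c) : T c = ((cellsF α).filter fun c' => o c' c).card + 1 := by
  have hset : (cellsF α).filter (fun c' => o c' c) = (cellsF α).filter (fun c' => T c' < T c) := by
    ext c'
    simp only [Finset.mem_filter, and_congr_right_iff]
    intro hc'
    constructor
    · exact hmono _ _ (mem_cellsF.mp hc') hc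
    · intro hlt
      have hne : c' ≠ c := fun h => by rw [h] at hlt; omega
      rcases htot c' c hne with h | h
      · exact h
      · have := hmono _ _ hc (mem_cellsF.mp hc') h
        omega
  rw [hset, count_lt ⟨hT.1, hT.2.1, hT.2.2.1, hT.2.2.2⟩ hc]
  have := hT.2.1 c hc
  omega

private lemma eq_of_mono {α : List ℕ} {T U : Filling} (o : ℕ × ℕ → ℕ × ℕ → Prop)
    (htot : ∀ c c', c ≠ c' → o c c' ∨ o c' c)
    (hT : IsStdFilling α T) (hU : IsStdFilling α U)
    (hmT : ∀ c c', IsCell α c → IsCell α c' → o c c' → T c < T c')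
    (hmU : ∀ c c', IsCell α c → IsCell α c' → o c c' → U c < U c') : T = U := by
  funext c
  by_cases hc : IsCell α c
  · rw [value_formula o htot hT hmT hc, value_formula o htot hU hmU hc]
  · rw [hT.1 c hc, hU.1 c hc]

private lemma Scol_std (α : List ℕ) : IsStdFilling α (Scol α) := by
  have hmono : ∀ c c', IsCell α c → IsCell α c' → colOrd c c' → Scol α c < Scol α c' :=
    fun c c' hc hc' h => Scol_lt_of_colOrd hc hc' h
  have hinj := inj_of_mono colOrd colOrd_total hmono
  have hbd : ∀ c, IsCell α c → 1 ≤ Scol α c ∧ Scol α c ≤ α.sum := fun c hc =>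
    ⟨by rw [Scol_eq hc]; omega, Scol_le hc⟩
  exact ⟨fun c hc => by show (if IsCell α c then _ else 0) = 0; rw [if_neg hc],
    hbd, hinj, surj_of_inj hbd hinj⟩

private lemma Scol_SET (α : List ℕ) : IsSET α (Scol α) :=
  ⟨Scol_std α, fun i j j' h h' hj => Scol_lt_of_colOrd h h' (Or.inl hj),
    fun i i' j h h' hi => Scol_lt_of_colOrd h h' (Or.inr ⟨rfl, hi⟩)⟩

private lemma take_sum_mono (α : List ℕ) {a b : ℕ} (h : a ≤ b) :
    (α.take a).sum ≤ (α.take b).sum := by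
  conv_rhs => rw [← List.take_append_drop a (α.take b)]
  rw [List.sum_append, List.take_take, min_eq_left h]
  omega

private lemma take_sum_succ {α : List ℕ} {i : ℕ} (h : i < α.length) :
    (α.take (i + 1)).sum = (α.take i).sum + α.getD i 0 := by
  rw [List.getD_eq_getElem α 0 h, List.sum_take_succ α i h]

private lemma Srow_eq {α : List ℕ} {c : ℕ × ℕ} (hc : IsCell α c) :
    Srow α c = (α.take c.1).sum + c.2 + 1 := by
  show (if IsCell α c then _ else 0) = _
  rw [if_pos hc]

private lemma Srow_step {α : List ℕ} {c : ℕ × ℕ} (hc : IsCell α c) :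
    (α.take c.1).sum + c.2 + 1 ≤ (α.take (c.1 + 1)).sum := by
  rw [take_sum_succ hc.1]
  have := hc.2
  omega

private lemma Srow_le {α : List ℕ} {c : ℕ × ℕ} (hc : IsCell α c) : Srow α c ≤ α.sum := by
  rw [Srow_eq hc]
  have h1 := Srow_step hc
  have h2 : (α.take (c.1 + 1)).sum ≤ (α.take α.length).sum := take_sum_mono α hc.1
  rw [List.take_length] at h2
  omega

private lemma Srow_lt_of_rowOrd {α : List ℕ} {c c' : ℕ × ℕ} (hc : IsCell α c)
    (hc' : IsCell α c') (h : rowOrd c c') : Srow α c < Srow α c' := by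
  rw [Srow_eq hc, Srow_eq hc']
  rcases h with h | ⟨h1, h2⟩
  · have e1 := Srow_step hc
    have e2 : (α.take (c.1 + 1)).sum ≤ (α.take c'.1).sum := take_sum_mono α h
    omega
  · rw [h1]
    omega

private lemma Srow_std (α : List ℕ) : IsStdFilling α (Srow α) := by
  have hmono : ∀ c c', IsCell α c → IsCell α c' → rowOrd c c' → Srow α c < Srow α c' :=
    fun c c' hc hc' h => Srow_lt_of_rowOrd hc hc' h
  have hinj := inj_of_mono rowOrd rowOrd_total hmono
  have hbd : ∀ c, IsCell α c → 1 ≤ Srow α c ∧ Srow α c ≤ α.sum := fun c hc =>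
    ⟨by rw [Srow_eq hc]; omega, Srow_le hc⟩
  exact ⟨fun c hc => by show (if IsCell α c then _ else 0) = 0; rw [if_neg hc],
    hbd, hinj, surj_of_inj hbd hinj⟩

/-! ### Swap lemmas -/

private lemma swap_apply (i : ℕ) (T : Filling) (c : ℕ × ℕ) :
    swapEntries i T c = if T c = i then i + 1 else if T c = i + 1 then i else T c := rfl

private lemma swap_swap (m : ℕ) (T : Filling) : swapEntries m (swapEntries m T) = T := by
  funext c
  simp only [swapEntries]
  split_ifs <;> omega

private lemma swap_preserves_SET {α : List ℕ} {T : Filling} {a b : ℕ × ℕ} (hT : IsSET α T)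
    (ha : IsCell α a) (hb : IsCell α b) (he : T b = T a + 1)
    (hrow : a.1 ≠ b.1) (hcol : a.2 ≠ b.2) : IsSET α (swapEntries (T a) T) := by
  obtain ⟨⟨hz, hbd, hinj, hsurj⟩, hrows, hcols⟩ := hT
  set m := T a with hm
  have hm1 : 1 ≤ m := (hbd a ha).1
  have hmn : m + 1 ≤ α.sum := by have := hbd b hb; omega
  have hab : ∀ c c' : ℕ × ℕ, IsCell α c → IsCell α c' → T c = m → T c' = m + 1 →
      c = a ∧ c' = b := fun c c' hc hc' e1 e2 =>
    ⟨hinj c a hc ha (by omega), hinj c' b hc' hb (by omega)⟩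
  refine ⟨⟨?_, ?_, ?_, ?_⟩, ?_, ?_⟩
  · intro c hc
    rw [swap_apply, hz c hc, if_neg (by omega), if_neg (by omega)]
  · intro c hc
    rw [swap_apply]
    have := hbd c hc
    split_ifs <;> omega
  · intro c c' hc hc' hee
    refine hinj c c' hc hc' ?_
    rw [swap_apply, swap_apply] at hee
    split_ifs at hee <;> omega
  · intro v hv1 hv2
    by_cases h1 : v = m
    · exact ⟨b, hb, by rw [swap_apply, if_neg (by omega), if_pos (by omega)]; omega⟩
    by_cases h2 : v = m + 1
    · exact ⟨a, ha, by rw [swap_apply, if_pos hm.symm]; omega⟩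
    · obtain ⟨c, hc, hee⟩ := hsurj v hv1 hv2
      exact ⟨c, hc, by rw [swap_apply, hee, if_neg h1, if_neg h2]⟩
  · intro i j j' h h' hj
    have hlt := hrows i j j' h h' hj
    have hne : ¬(T (i, j) = m ∧ T (i, j') = m + 1) := by
      rintro ⟨e1, e2⟩
      obtain ⟨ea, eb⟩ := hab _ _ h h' e1 e2
      apply hrow
      rw [← ea, ← eb]
    rw [swap_apply, swap_apply]
    split_ifs <;> omega
  · intro i i' j h h' hi
    have hlt := hcols i i' j h h' hi
    have hne : ¬(T (i, j) = m ∧ T (i', j) = m + 1) := by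
      rintro ⟨e1, e2⟩
      obtain ⟨ea, eb⟩ := hab _ _ h h' e1 e2
      apply hcol
      rw [← ea, ← eb]
    rw [swap_apply, swap_apply]
    split_ifs <;> omega

/-! ### The statistic `mu` -/

private def muF (α : List ℕ) (R T : Filling) : ℕ := ∑ c ∈ cellsF α, T c * R c

private lemma muF_le {α : List ℕ} {R T : Filling} (hbd : ∀ c, IsCell α c → T c ≤ α.sum) :
    muF α R T ≤ ∑ c ∈ cellsF α, α.sum * R c :=
  Finset.sum_le_sum fun c hc => Nat.mul_le_mul_right _ (hbd c (mem_cellsF.mp hc))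

private lemma muF_swap {α : List ℕ} {R T : Filling} {a b : ℕ × ℕ} (hstd : IsStdFilling α T)
    (ha : IsCell α a) (hb : IsCell α b) (he : T b = T a + 1)
    (hR : R b < R a) : muF α R T < muF α R (swapEntries (T a) T) := by
  set m := T a with hm
  have hab : a ≠ b := fun h => by rw [h] at hm; omega
  have haF : a ∈ cellsF α := mem_cellsF.mpr ha
  have hbF : b ∈ (cellsF α).erase a := Finset.mem_erase.mpr ⟨fun h => hab h.symm, mem_cellsF.mpr hb⟩
  have expand : ∀ U : Filling, muF α R U
      = U a * R a + (U b * R b + ∑ c ∈ ((cellsF α).erase a).erase b, U c * R c) := by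
    intro U
    rw [muF, ← Finset.add_sum_erase _ _ haF, ← Finset.add_sum_erase _ _ hbF]
  rw [expand T, expand (swapEntries m T)]
  have hrest : ∑ c ∈ ((cellsF α).erase a).erase b, swapEntries m T c * R c
      = ∑ c ∈ ((cellsF α).erase a).erase b, T c * R c := by
    refine Finset.sum_congr rfl fun c hcm => ?_
    have hcb : c ≠ b := (Finset.mem_erase.mp hcm).1
    have hca : c ≠ a := (Finset.mem_erase.mp (Finset.mem_erase.mp hcm).2).1
    have hc : IsCell α c := mem_cellsF.mp (Finset.mem_erase.mp (Finset.mem_erase.mp hcm).2).2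
    have h1 : T c ≠ m := fun h => hca (hstd.2.2.1 c a hc ha (by omega))
    have h2 : T c ≠ m + 1 := fun h => hcb (hstd.2.2.1 c b hc hb (by omega))
    rw [swap_apply, if_neg h1, if_neg h2]
  rw [hrest]
  have e1 : swapEntries m T a = m + 1 := by rw [swap_apply, if_pos hm.symm]
  have e2 : swapEntries m T b = m := by rw [swap_apply, if_neg (by omega), if_pos (by omega)]
  rw [e1, e2, ← hm, he]
  have hRa := hR
  nlinarith

/-! ### Alignment lemmas -/

private lemma mono_of_consec {α : List ℕ} {T : Filling} (o : ℕ × ℕ → ℕ × ℕ → Prop)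
    (htrans : ∀ x y z, o x y → o y z → o x z) (hstd : IsStdFilling α T)
    (hcons : ∀ a b, IsCell α a → IsCell α b → T b = T a + 1 → o a b) :
    ∀ a b, IsCell α a → IsCell α b → T a < T b → o a b := by
  obtain ⟨hz, hbd, hinj, hsurj⟩ := hstd
  suffices H : ∀ k a b, IsCell α a → IsCell α b → T b = T a + (k + 1) → o a b by
    intro a b ha hb hlt
    exact H (T b - T a - 1) a b ha hb (by omega)
  intro k
  induction k with
  | zero => intro a b ha hb h; exact hcons a b ha hb (by omega)
  | succ k ih =>
    intro a b ha hb h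
    obtain ⟨w, hw, hTw⟩ := hsurj (T a + (k + 1)) (by have := hbd a ha; omega)
      (by have := hbd b hb; omega)
    exact htrans _ _ _ (ih a w ha hw (by omega)) (hcons w b hw hb (by omega))

private lemma full_mono {α : List ℕ} {T : Filling} (o : ℕ × ℕ → ℕ × ℕ → Prop)
    (htot : ∀ c c', c ≠ c' → o c c' ∨ o c' c)
    (htrans : ∀ x y z, o x y → o y z → o x z)
    (hasym : ∀ x y, o x y → ¬ o y x) (hstd : IsStdFilling α T)
    (hcons : ∀ a b, IsCell α a → IsCell α b → T b = T a + 1 → o a b) :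
    ∀ c c', IsCell α c → IsCell α c' → o c c' → T c < T c' := by
  have hmono := mono_of_consec o htrans hstd hcons
  intro c c' hc hc' ho
  rcases Nat.lt_trichotomy (T c) (T c') with h | h | h
  · exact h
  · have hcc : c = c' := hstd.2.2.1 c c' hc hc' h
    subst hcc
    exact absurd ho (hasym c c ho)
  · exact absurd (hmono _ _ hc' hc h) (hasym _ _ ho)

private lemma col_aligned {α : List ℕ} {T : Filling} (hT : IsSET α T)
    (hno : ∀ a b : ℕ × ℕ, IsCell α a → IsCell α b → T b = T a + 1 →
      ¬(a.1 < b.1 ∧ b.2 < a.2)) : T = Scol α := by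
  obtain ⟨hstd, hrows, hcols⟩ := hT
  have hcons : ∀ a b, IsCell α a → IsCell α b → T b = T a + 1 → colOrd a b := by
    rintro ⟨a1, a2⟩ ⟨b1, b2⟩ ha hb he
    have hne : (a1, a2) ≠ (b1, b2) := fun h => by rw [h] at he; omega
    rcases colOrd_total _ _ hne with h | h
    · exact h
    exfalso
    rcases colOrd_elim h with hq | ⟨h1, h2⟩
    · -- hq : b2 < a2
      rcases Nat.lt_trichotomy a1 b1 with hr | hr | hr
      · exact hno (a1, a2) (b1, b2) ha hb he ⟨hr, hq⟩
      · subst hr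
        have := hrows a1 b2 a2 hb ha hq
        omega
      · have hd : IsCell α (a1, b2) := ⟨ha.1, lt_trans hq ha.2⟩
        have h5 := hrows a1 b2 a2 hd ha hq
        have h6 := hcols b1 a1 b2 hb hd hr
        omega
    · -- h1 : b2 = a2, h2 : b1 < a1
      rw [h1] at hb he
      have := hcols b1 a1 a2 hb ha h2
      omega
  have hmono := full_mono colOrd colOrd_total colOrd_trans colOrd_asymm hstd hcons
  exact eq_of_mono colOrd colOrd_total hstd (Scol_std α) hmono
    (fun c c' hc hc' h => Scol_lt_of_colOrd hc hc' h)

private lemma row_aligned {α : List ℕ} {T : Filling} (hT : IsSET α T)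
    (hno : ∀ a b : ℕ × ℕ, IsCell α a → IsCell α b → T b = T a + 1 → ¬(b.1 < a.1)) :
    T = Srow α := by
  obtain ⟨hstd, hrows, hcols⟩ := hT
  have hcons : ∀ a b, IsCell α a → IsCell α b → T b = T a + 1 → rowOrd a b := by
    rintro ⟨a1, a2⟩ ⟨b1, b2⟩ ha hb he
    have hne : (a1, a2) ≠ (b1, b2) := fun h => by rw [h] at he; omega
    rcases rowOrd_total _ _ hne with h | h
    · exact h
    exfalso
    rcases rowOrd_elim h with hq | ⟨h1, h2⟩
    · exact hno (a1, a2) (b1, b2) ha hb he hq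
    · rw [h1] at hb he
      have := hrows a1 b2 a2 hb ha h2
      omega
  have hmono := full_mono rowOrd rowOrd_total rowOrd_trans rowOrd_asymm hstd hcons
  exact eq_of_mono rowOrd rowOrd_total hstd (Srow_std α) hmono
    (fun c c' hc hc' h => Srow_lt_of_rowOrd hc hc' h)

/-! ### Operator evaluation -/

private lemma piRS_some (α : List ℕ) (i : ℕ) (T : Filling) :
    piRS α i (some T) = if SuccAbove α T i then some T
      else if SuccSameRow α T i then none else some (swapEntries i T) := rfl

private lemma piRS_none (α : List ℕ) (i : ℕ) : piRS α i none = none := rfl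

private lemma applySeq_cons (α : List ℕ) (i : ℕ) (l : List ℕ) (x : Option Filling) :
    applySeqRS α (i :: l) x = applySeqRS α l (piRS α i x) := rfl

private lemma applySeq_none (α : List ℕ) (l : List ℕ) : applySeqRS α l none = none := by
  induction l with
  | nil => rfl
  | cons i l ih => rw [applySeq_cons, piRS_none, ih]

private lemma succ_eval {α : List ℕ} {T : Filling} {a b : ℕ × ℕ} (hstd : IsStdFilling α T)
    (ha : IsCell α a) (hb : IsCell α b) (he : T b = T a + 1) (hba : b.1 < a.1) :
    piRS α (T a) (some T) = some (swapEntries (T a) T) := by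
  have hinj := hstd.2.2.1
  have hA : ¬ SuccAbove α T (T a) := by
    rintro ⟨c, c', hc, hc', e1, e2, hlt⟩
    have h1 : c = a := hinj c a hc ha e1
    have h2 : c' = b := hinj c' b hc' hb (by omega)
    rw [h1, h2] at hlt
    omega
  have hS : ¬ SuccSameRow α T (T a) := by
    rintro ⟨c, c', hc, hc', e1, e2, hlt⟩
    have h1 : c = a := hinj c a hc ha e1
    have h2 : c' = b := hinj c' b hc' hb (by omega)
    rw [h1, h2] at hlt
    omega
  rw [piRS_some, if_neg hA, if_neg hS]

private lemma col_ne_of_below {α : List ℕ} {T : Filling} {a b : ℕ × ℕ} (hT : IsSET α T)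
    (ha : IsCell α a) (hb : IsCell α b) (he : T b = T a + 1) (h1 : b.1 < a.1) :
    a.2 ≠ b.2 := by
  obtain ⟨a1, a2⟩ := a
  obtain ⟨b1, b2⟩ := b
  simp only at h1 ⊢
  intro h
  subst h
  have := hT.2.2 b1 a1 a2 hb ha h1
  omega

/-! ### Reachability -/

private lemma reach_from_scol (α : List ℕ) :
    ∀ T, IsSET α T → ∃ l : List ℕ, (∀ i ∈ l, 1 ≤ i ∧ i ≤ α.sum - 1) ∧
      applySeqRS α l (some (Scol α)) = some T ∧
      (∀ k, k ≤ l.length → ∃ T', applySeqRS α (l.take k) (some (Scol α)) = some T' ∧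
        IsSET α T') := by
  set B := ∑ c ∈ cellsF α, α.sum * Scol α c with hB
  suffices H : ∀ d T, IsSET α T → B - muF α (Scol α) T = d →
      ∃ l : List ℕ, (∀ i ∈ l, 1 ≤ i ∧ i ≤ α.sum - 1) ∧
      applySeqRS α l (some (Scol α)) = some T ∧
      (∀ k, k ≤ l.length → ∃ T', applySeqRS α (l.take k) (some (Scol α)) = some T' ∧
        IsSET α T') by
    intro T hT
    exact H _ T hT rfl
  intro d
  induction d using Nat.strong_induction_on with
  | _ d ih =>
    intro T hT hd
    by_cases hex : ∃ a b : ℕ × ℕ, IsCell α a ∧ IsCell α b ∧ T b = T a + 1 ∧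
        a.1 < b.1 ∧ b.2 < a.2
    · obtain ⟨a, b, ha, hb, he, h1, h2⟩ := hex
      have hT' : IsSET α (swapEntries (T a) T) :=
        swap_preserves_SET hT ha hb he (by omega) (by omega)
      have hmu : muF α (Scol α) T < muF α (Scol α) (swapEntries (T a) T) :=
        muF_swap hT.1 ha hb he (Scol_lt_of_colOrd hb ha (Or.inl h2))
      have hmuB : muF α (Scol α) (swapEntries (T a) T) ≤ B :=
        muF_le fun c hc => (hT'.1.2.1 c hc).2
      have hmuT : muF α (Scol α) T ≤ B := muF_le fun c hc => (hT.1.2.1 c hc).2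
      obtain ⟨l', hl1, hl2, hl3⟩ := ih (B - muF α (Scol α) (swapEntries (T a) T))
        (by omega) (swapEntries (T a) T) hT' rfl
      have hm1 : 1 ≤ T a := (hT.1.2.1 a ha).1
      have hm2 : T a + 1 ≤ α.sum := by have := hT.1.2.1 b hb; omega
      have heval : applySeqRS α (l' ++ [T a]) (some (Scol α)) = some T := by
        rw [applySeqRS, List.foldl_append]
        show piRS α (T a) (applySeqRS α l' (some (Scol α))) = some T
        rw [hl2]
        have ea : swapEntries (T a) T b = T a := by
          rw [swap_apply, if_neg (by omega), if_pos (by omega)]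
        have eb : swapEntries (T a) T a = T a + 1 := by
          rw [swap_apply, if_pos rfl]
        have := succ_eval hT'.1 hb ha (by omega) h1
        rw [ea] at this
        rw [this, swap_swap]
      refine ⟨l' ++ [T a], ?_, heval, ?_⟩
      · intro i hi
        rcases List.mem_append.mp hi with h | h
        · exact hl1 i h
        · have : i = T a := by simpa using h
          subst this
          exact ⟨hm1, by omega⟩
      · intro k hk
        rcases Nat.lt_or_ge k (l'.length + 1) with h | h
        · have hk' : k ≤ l'.length := by omega
          rw [List.take_append_of_le_length hk']
          exact hl3 k hk'
        · have hkk : k = l'.length + 1 := by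
            rw [List.length_append] at hk
            simpa using le_antisymm hk h
          subst hkk
          rw [List.take_of_length_le (by simp)]
          exact ⟨T, heval, hT⟩
    · have hTeq : T = Scol α := by
        apply col_aligned hT
        intro a b ha hb he hcon
        exact hex ⟨a, b, ha, hb, he, hcon.1, hcon.2⟩
      refine ⟨[], by simp, by rw [hTeq]; rfl, fun k hk => ?_⟩
      refine ⟨Scol α, ?_, Scol_SET α⟩
      rw [List.take_nil]
      rfl

private lemma reach_to_srow (α : List ℕ) :
    ∀ T, IsSET α T → ∃ l : List ℕ, (∀ i ∈ l, 1 ≤ i ∧ i ≤ α.sum - 1) ∧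
      applySeqRS α l (some T) = some (Srow α) := by
  set B := ∑ c ∈ cellsF α, α.sum * Srow α c with hB
  suffices H : ∀ d T, IsSET α T → B - muF α (Srow α) T = d →
      ∃ l : List ℕ, (∀ i ∈ l, 1 ≤ i ∧ i ≤ α.sum - 1) ∧
      applySeqRS α l (some T) = some (Srow α) by
    intro T hT
    exact H _ T hT rfl
  intro d
  induction d using Nat.strong_induction_on with
  | _ d ih =>
    intro T hT hd
    by_cases hex : ∃ a b : ℕ × ℕ, IsCell α a ∧ IsCell α b ∧ T b = T a + 1 ∧ b.1 < a.1
    · obtain ⟨a, b, ha, hb, he, h1⟩ := hex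
      have hcol : a.2 ≠ b.2 := col_ne_of_below hT ha hb he h1
      have hT' : IsSET α (swapEntries (T a) T) :=
        swap_preserves_SET hT ha hb he (by omega) hcol
      have hmu : muF α (Srow α) T < muF α (Srow α) (swapEntries (T a) T) :=
        muF_swap hT.1 ha hb he (Srow_lt_of_rowOrd hb ha (Or.inl h1))
      have hmuB : muF α (Srow α) (swapEntries (T a) T) ≤ B :=
        muF_le fun c hc => (hT'.1.2.1 c hc).2
      have hmuT : muF α (Srow α) T ≤ B := muF_le fun c hc => (hT.1.2.1 c hc).2
      obtain ⟨l', hl1, hl2⟩ := ih (B - muF α (Srow α) (swapEntries (T a) T))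
        (by omega) (swapEntries (T a) T) hT' rfl
      have hm1 : 1 ≤ T a := (hT.1.2.1 a ha).1
      have hm2 : T a + 1 ≤ α.sum := by have := hT.1.2.1 b hb; omega
      refine ⟨T a :: l', ?_, ?_⟩
      · intro i hi
        rcases List.mem_cons.mp hi with h | h
        · subst h
          exact ⟨hm1, by omega⟩
        · exact hl1 i h
      · rw [applySeq_cons, succ_eval hT.1 ha hb he h1, hl2]
    · have hTeq : T = Srow α := by
        apply row_aligned hT
        intro a b ha hb he hcon
        exact hex ⟨a, b, ha, hb, he, hcon⟩
      exact ⟨[], by simp, by rw [hTeq]; rfl⟩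

private lemma preserve_SET {α : List ℕ} : ∀ l : List ℕ, (∀ i ∈ l, 1 ≤ i ∧ i ≤ α.sum - 1) →
    ∀ T U : Filling, IsSET α T → applySeqRS α l (some T) = some U → IsSET α U := by
  intro l
  induction l with
  | nil =>
    intro _ T U hT h
    have : T = U := Option.some_inj.mp h
    rwa [← this]
  | cons i l ih =>
    intro hbd T U hT h
    have hi := hbd i List.mem_cons_self
    have hbd' : ∀ j ∈ l, 1 ≤ j ∧ j ≤ α.sum - 1 := fun j hj => hbd j (List.mem_cons_of_mem _ hj)
    rw [applySeq_cons] at h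
    by_cases h1 : SuccAbove α T i
    · rw [piRS_some, if_pos h1] at h
      exact ih hbd' T U hT h
    by_cases h2 : SuccSameRow α T i
    · rw [piRS_some, if_neg h1, if_pos h2, applySeq_none] at h
      exact absurd h (by simp)
    · rw [piRS_some, if_neg h1, if_neg h2] at h
      obtain ⟨a, ha, hTa⟩ := hT.1.2.2.2 i hi.1 (by omega)
      obtain ⟨b, hb, hTb⟩ := hT.1.2.2.2 (i + 1) (by omega) (by omega)
      have hba : b.1 < a.1 := by
        rcases Nat.lt_trichotomy a.1 b.1 with hr | hr | hr
        · exact absurd ⟨a, b, ha, hb, hTa, hTb, hr⟩ h1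
        · exact absurd ⟨a, b, ha, hb, hTa, hTb, hr⟩ h2
        · exact hr
      have hcol : a.2 ≠ b.2 := col_ne_of_below hT ha hb (by omega) hba
      have hT' : IsSET α (swapEntries i T) := by
        have := swap_preserves_SET hT ha hb (by omega) (by omega) hcol
        rwa [hTa] at this
      exact ih hbd' _ U hT' h

theorem Scol_unique_minimal_of_SET (n : ℕ) (α : List ℕ) (hα : IsComposition α n) :
    IsSET α (Scol α) ∧
    (∀ T, IsSET α T → ∃ l : List ℕ, (∀ i ∈ l, 1 ≤ i ∧ i ≤ n - 1) ∧
      applySeqRS α l (some (Scol α)) = some T ∧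
      (∀ k, k ≤ l.length → ∃ T', applySeqRS α (l.take k) (some (Scol α)) = some T' ∧
        IsSET α T')) ∧
    (∀ T, IsSIT α T → (IsSET α T ↔ (preRS α (Scol α) T ∧ preRS α T (Srow α)))) := by
  obtain ⟨hpos, hsum⟩ := hα
  subst hsum
  refine ⟨Scol_SET α, fun T hT => reach_from_scol α T hT, fun T _ => ?_⟩
  constructor
  · intro hT
    refine ⟨?_, ?_⟩
    · obtain ⟨l, h1, h2, _⟩ := reach_from_scol α T hT
      exact ⟨l, h1, h2⟩
    · obtain ⟨l, h1, h2⟩ := reach_to_srow α T hT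
      exact ⟨l, h1, h2⟩
  · rintro ⟨⟨l, hb, he⟩, _⟩
    exact preserve_SET l hb (Scol α) T (Scol_SET α) he

end ImmHecke
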